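/- (A bialgebra which is also a Frobenius algebra is trivial) Let A be an object of a monoidal category carrying a Frobenius algebra (μ, η, δ, ε) which in addition satisfies the bialgebra compatibility equations η ≫ δ = λ_𝟙⁻¹ ≫ (η ⊗ η), μ ≫ ε = (ε ⊗ ε) ≫ λ_𝟙, and η ≫ ε = 𝟙_𝟙. Then ε ≫ η = 𝟙_A; hence ε : A ⟶ 𝟙 and η : 𝟙 ⟶ A are mutually inverse and A is isomorphic to the monoidal unit. -/

import Mathlib

open CategoryTheory MonoidalCategory

/-- Coherence/naturality step: the middle of the Frobenius-bialgebra computation. -/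
lemma stmt_7_aux {C : Type*} [Category C] [MonoidalCategory C] {A : C}
    (η : 𝟙_ C ⟶ A) (ε : A ⟶ 𝟙_ C)
    (compat_unit_counit : η ≫ ε = 𝟙 (𝟙_ C)) :
    (((λ_ (𝟙_ C)).inv ≫ (η ⊗ₘ η)) ▷ A) ≫ (α_ A A A).hom ≫ (A ◁ ((ε ⊗ₘ ε) ≫ (λ_ (𝟙_ C)).hom))
      = (λ_ A).hom ≫ ε ≫ η ≫ (ρ_ A).inv := by
  simp only [MonoidalCategory.tensorHom_def, comp_whiskerRight, Category.assoc, MonoidalCategory.whiskerLeft_comp]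
  slice_lhs 3 4 => rw [associator_naturality_middle]
  slice_lhs 4 5 => rw [← MonoidalCategory.whiskerLeft_comp, ← comp_whiskerRight,
    compat_unit_counit]
  simp [whisker_exchange]
  rw [← whisker_exchange]
  simp
  rw [unitors_inv_equal]; simp

/-- A bialgebra which is also a Frobenius algebra is trivial: if a Frobenius algebra
`(μ, η, δ, ε)` on `A` moreover satisfies the bialgebra compatibility equations
`η ≫ δ = λ⁻¹ ≫ (η ⊗ η)`, `μ ≫ ε = (ε ⊗ ε) ≫ λ` and `η ≫ ε = 𝟙`, then `ε ≫ η = 𝟙 A`;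
hence `ε` and `η` are mutually inverse and `A` is isomorphic to the monoidal unit. -/
theorem stmt_7 {C : Type*} [Category C] [MonoidalCategory C] {A : C}
    (μ : A ⊗ A ⟶ A) (η : 𝟙_ C ⟶ A) (δ : A ⟶ A ⊗ A) (ε : A ⟶ 𝟙_ C)
    (mul_assoc' : (μ ▷ A) ≫ μ = (α_ A A A).hom ≫ (A ◁ μ) ≫ μ)
    (one_mul' : (η ▷ A) ≫ μ = (λ_ A).hom)
    (mul_one' : (A ◁ η) ≫ μ = (ρ_ A).hom)
    (coassoc : δ ≫ (δ ▷ A) ≫ (α_ A A A).hom = δ ≫ (A ◁ δ))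
    (counit_left : δ ≫ (ε ▷ A) = (λ_ A).inv)
    (counit_right : δ ≫ (A ◁ ε) = (ρ_ A).inv)
    (frobenius_left : (δ ▷ A) ≫ (α_ A A A).hom ≫ (A ◁ μ) = μ ≫ δ)
    (frobenius_right : (A ◁ δ) ≫ (α_ A A A).inv ≫ (μ ▷ A) = μ ≫ δ)
    (compat_comul_unit : η ≫ δ = (λ_ (𝟙_ C)).inv ≫ (η ⊗ₘ η))
    (compat_mul_counit : μ ≫ ε = (ε ⊗ₘ ε) ≫ (λ_ (𝟙_ C)).hom)
    (compat_unit_counit : η ≫ ε = 𝟙 (𝟙_ C)) :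
    ε ≫ η = 𝟙 A ∧ Nonempty (A ≅ 𝟙_ C) := by
  have key : ε ≫ η = 𝟙 A := by
    calc ε ≫ η
        = (λ_ A).inv ≫ ((λ_ A).hom ≫ ε ≫ η ≫ (ρ_ A).inv) ≫ (ρ_ A).hom := by simp
      _ = (λ_ A).inv ≫ ((((λ_ (𝟙_ C)).inv ≫ (η ⊗ₘ η)) ▷ A) ≫ (α_ A A A).hom ≫
            (A ◁ ((ε ⊗ₘ ε) ≫ (λ_ (𝟙_ C)).hom))) ≫ (ρ_ A).hom := by
          rw [stmt_7_aux η ε compat_unit_counit]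
      _ = (λ_ A).inv ≫ (((η ≫ δ) ▷ A) ≫ (α_ A A A).hom ≫ (A ◁ (μ ≫ ε))) ≫ (ρ_ A).hom := by
          rw [compat_comul_unit, compat_mul_counit]
      _ = (λ_ A).inv ≫ (η ▷ A) ≫ ((δ ▷ A) ≫ (α_ A A A).hom ≫ (A ◁ μ)) ≫
            (A ◁ ε) ≫ (ρ_ A).hom := by
          simp only [comp_whiskerRight, MonoidalCategory.whiskerLeft_comp, Category.assoc]
      _ = (λ_ A).inv ≫ (η ▷ A) ≫ (μ ≫ δ) ≫ (A ◁ ε) ≫ (ρ_ A).hom := by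
          rw [frobenius_left]
      _ = 𝟙 A := by
          slice_lhs 2 3 => rw [one_mul']
          slice_lhs 3 4 => rw [counit_right]
          simp
  exact ⟨key, ⟨⟨ε, η, key, compat_unit_counit⟩⟩⟩
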